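/- For positive integers β and Δ, every graph G with matching number at most β and maximum degree at most Δ satisfies |E(G)| ≤ Δβ + ⌊Δ/2⌋·⌊β/⌈Δ/2⌉⌋, and in particular |E(G)| ≤ Δβ + β. -/

import Mathlib

open Classical in
/-- Adjacency matrix of a simple graph over ℝ. -/
noncomputable def adjMat {V : Type*} [Fintype V] (G : SimpleGraph V) : Matrix V V ℝ :=
  Matrix.of fun i j => if G.Adj i j then (1 : ℝ) else 0

/-- Spectral radius: largest adjacency eigenvalue. -/
noncomputable def specRad {V : Type*} [Fintype V] (G : SimpleGraph V) : ℝ :=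
  sSup {t : ℝ | ∃ x : V → ℝ, x ≠ 0 ∧ (adjMat G).mulVec x = t • x}

/-- `G` contains two edge-disjoint cycles. -/
def HasTwoEdgeDisjointCycles {V : Type*} (G : SimpleGraph V) : Prop :=
  ∃ (u v : V) (c₁ : G.Walk u u) (c₂ : G.Walk v v),
    c₁.IsCycle ∧ c₂.IsCycle ∧ ∀ e ∈ c₁.edges, e ∉ c₂.edges

/-- `G` contains two distinct cycles (as subgraphs) of the same length. -/
def HasTwoCyclesSameLength {V : Type*} [DecidableEq V] (G : SimpleGraph V) : Prop :=
  ∃ (u v : V) (c₁ : G.Walk u u) (c₂ : G.Walk v v),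
    c₁.IsCycle ∧ c₂.IsCycle ∧ c₁.length = c₂.length ∧
      c₁.edges.toFinset ≠ c₂.edges.toFinset

/-- The edge set of a triangle given by a triple of vertices. -/
def triEdges {V : Type*} (t : V × V × V) : Set (Sym2 V) :=
  {s(t.1, t.2.1), s(t.2.1, t.2.2), s(t.1, t.2.2)}

/-- `G` contains `k` pairwise edge-disjoint triangles. -/
def HasEdgeDisjointTriangles {V : Type*} (G : SimpleGraph V) (k : ℕ) : Prop :=
  ∃ T : Fin k → V × V × V,
    (∀ i, G.Adj (T i).1 (T i).2.1 ∧ G.Adj (T i).2.1 (T i).2.2 ∧ G.Adj (T i).1 (T i).2.2) ∧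
    ∀ i j, i ≠ j → Disjoint (triEdges (T i)) (triEdges (T j))

/-- The star `K_{1,n-1}` (center `0`) plus an edge between the leaves `1` and `2`. -/
def starPlus (n : ℕ) : SimpleGraph (Fin n) :=
  SimpleGraph.fromRel (fun x y => x.val = 0 ∨ (x.val < 3 ∧ y.val < 3))

/-- `K₄ • K_{1,n-4}`: `K₄` on `{0,1,2,3}` with `0` joined to everything. -/
def K4Star (n : ℕ) : SimpleGraph (Fin n) :=
  SimpleGraph.fromRel (fun x y => x.val = 0 ∨ (x.val < 4 ∧ y.val < 4))

/-- `K_{3,3} • K_{1,n-6}`: `K_{3,3}` with parts `{0,1,2}`, `{3,4,5}`, and the vertex `0`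
identified with the center of a star with leaves `6,…,n-1`. -/
def K33Star (n : ℕ) : SimpleGraph (Fin n) :=
  SimpleGraph.fromRel (fun x y =>
    (x.val < 3 ∧ 3 ≤ y.val ∧ y.val < 6) ∨ (x.val = 0 ∧ 6 ≤ y.val))

/-- `K_{⌈n/2⌉,⌊n/2⌋}` with a star `K_{1,k-1}` (center `0`, leaves `1,…,k-1`) embedded
in the part `{0,…,⌊n/2⌋-1}` of size `⌊n/2⌋`. -/
def bipStar (n k : ℕ) : SimpleGraph (Fin n) :=
  SimpleGraph.fromRel (fun x y =>
    (x.val < n / 2 ∧ n / 2 ≤ y.val) ∨ (x.val = 0 ∧ 0 < y.val ∧ y.val < k))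

/-- `K_{⌈n/2⌉,⌊n/2⌋}` with a triangle `C₃` on `{0,1,2}` embedded in the part of size `⌊n/2⌋`. -/
def bipTri (n : ℕ) : SimpleGraph (Fin n) :=
  SimpleGraph.fromRel (fun x y =>
    (x.val < n / 2 ∧ n / 2 ≤ y.val) ∨ (x.val < 3 ∧ y.val < 3))

/-- `v` is a cut vertex of `G`. -/
def IsCutVertex {V : Type*} (G : SimpleGraph V) (v : V) : Prop :=
  ∃ a b : ({v}ᶜ : Set V), G.Reachable ↑a ↑b ∧ ¬ (G.induce ({v}ᶜ : Set V)).Reachable a b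

namespace CH
open Finset

attribute [local instance] Classical.propDecidable
set_option linter.unusedSectionVars false

universe u
variable {V : Type u} [Fintype V]

/-- matching predicate matching the hmatch format -/
def Mat (G : SimpleGraph V) (M : Finset (Sym2 V)) : Prop :=
  ↑M ⊆ G.edgeSet ∧ ∀ e ∈ M, ∀ f ∈ M, e ≠ f → ∀ v : V, ¬(v ∈ e ∧ v ∈ f)

def cov (M : Finset (Sym2 V)) (v : V) : Prop := ∃ e ∈ M, v ∈ e

def MatIn (G : SimpleGraph V) (S : Finset V) (M : Finset (Sym2 V)) : Prop :=
  Mat G M ∧ ∀ e ∈ M, ∀ v ∈ e, v ∈ S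

noncomputable def matchings (G : SimpleGraph V) (S : Finset V) : Finset (Finset (Sym2 V)) :=
  univ.filter (MatIn G S ·)

noncomputable def nuIn (G : SimpleGraph V) (S : Finset V) : ℕ :=
  (matchings G S).sup Finset.card

noncomputable def nu (G : SimpleGraph V) : ℕ := nuIn G univ

variable {G : SimpleGraph V} {S : Finset V} {M N : Finset (Sym2 V)}

lemma empty_matIn : MatIn G S (∅ : Finset (Sym2 V)) := by
  constructor
  · constructor
    · simp
    · simp
  · simp

lemma card_le_nuIn (h : MatIn G S M) : M.card ≤ nuIn G S :=
  Finset.le_sup (by simpa [matchings] using h)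

lemma exists_max_matching : ∃ M, MatIn G S M ∧ M.card = nuIn G S := by
  obtain ⟨M, hM, hc⟩ := Finset.exists_mem_eq_sup (matchings G S)
    ⟨∅, by simpa [matchings] using (empty_matIn (G := G) (S := S))⟩ Finset.card
  exact ⟨M, by simpa [matchings] using hM, hc.symm⟩

lemma nuIn_mono {S T : Finset V} (h : S ⊆ T) : nuIn G S ≤ nuIn G T := by
  apply Finset.sup_le
  intro M hM
  simp only [matchings, mem_filter] at hM
  exact card_le_nuIn ⟨hM.2.1, fun e he v hv => h (hM.2.2 e he v hv)⟩

lemma Mat.adj (h : Mat G M) {a b : V} (hab : s(a,b) ∈ M) : G.Adj a b := by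
  have := h.1 hab; rwa [SimpleGraph.mem_edgeSet] at this

lemma Mat.ne (h : Mat G M) {a b : V} (hab : s(a,b) ∈ M) : a ≠ b :=
  (h.adj hab).ne

lemma MatIn.mem_left (h : MatIn G S M) {a b : V} (hab : s(a,b) ∈ M) : a ∈ S :=
  h.2 _ hab a (by simp)

/-- uniqueness of partner -/
lemma Mat.unique (h : Mat G M) {v u u' : V} (h1 : s(v,u) ∈ M) (h2 : s(v,u') ∈ M) : u = u' := by
  by_contra hne
  have hed : s(v,u) ≠ s(v,u') := fun he => by
    replace he := (Sym2.mk_eq_mk_iff (p := (v,u)) (q := (v,u'))).1 he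
    rcases he with he | he
    · exact hne (Prod.ext_iff.1 he).2
    · have h1' : v = u' := (Prod.ext_iff.1 he).1
      have h2' : u = v := (Prod.ext_iff.1 he).2
      exact hne (h2'.trans h1')
  exact h.2 _ h1 _ h2 hed v ⟨by simp, by simp⟩

/-- partner function -/
noncomputable def pf (M : Finset (Sym2 V)) (v : V) : Option V :=
  if h : ∃ u, s(v,u) ∈ M then some h.choose else none

lemma pf_eq_some_of_mem (h : Mat G M) {v u : V} (hm : s(v,u) ∈ M) : pf M v = some u := by
  have hex : ∃ u, s(v,u) ∈ M := ⟨u, hm⟩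
  simp only [pf, dif_pos hex]
  exact congrArg some (h.unique hex.choose_spec hm)

lemma mem_of_pf_eq_some {v u : V} (h : pf M v = some u) : s(v,u) ∈ M := by
  by_cases hex : ∃ u, s(v,u) ∈ M
  · simp only [pf, dif_pos hex] at h
    obtain rfl : hex.choose = u := by simpa using h
    exact hex.choose_spec
  · simp [pf, dif_neg hex] at h

lemma cov_iff_exists : cov M v ↔ ∃ u, s(v,u) ∈ M := by
  constructor
  · rintro ⟨e, he, hv⟩
    obtain ⟨u, rfl⟩ := Sym2.mem_iff_exists.1 hv
    exact ⟨u, he⟩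
  · rintro ⟨u, hu⟩; exact ⟨_, hu, by simp⟩

lemma pf_eq_none_iff : pf M v = none ↔ ¬ cov M v := by
  rw [cov_iff_exists]
  constructor
  · intro h hex
    simp [pf, dif_pos hex] at h
  · intro h
    simp [pf, dif_neg h]

lemma pf_symm (h : Mat G M) {v u : V} (hm : pf M v = some u) : pf M u = some v := by
  have := mem_of_pf_eq_some hm
  rw [Sym2.eq_swap] at this
  exact pf_eq_some_of_mem h this

lemma pf_ne (h : Mat G M) {v u : V} (hm : pf M v = some u) : v ≠ u :=
  h.ne (mem_of_pf_eq_some hm)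

lemma pf_adj (h : Mat G M) {v u : V} (hm : pf M v = some u) : G.Adj v u :=
  h.adj (mem_of_pf_eq_some hm)

/-- endpoints as finset -/
lemma filter_mem_sym2 {a b : V} :
    (univ.filter (· ∈ s(a,b)) : Finset V) = {a, b} := by
  ext x; simp [Sym2.mem_iff]

lemma card_supp (hM : Mat G M) : (univ.filter (cov M ·)).card = 2 * M.card := by
  have : (univ.filter (cov M ·)) = M.biUnion (fun e => univ.filter (· ∈ e)) := by
    ext v
    rw [Finset.mem_filter, Finset.mem_biUnion]
    simp only [Finset.mem_filter, Finset.mem_univ, true_and]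
    rfl
  rw [this, Finset.card_biUnion]
  · rw [Finset.sum_congr rfl (fun e he => ?_), Finset.sum_const, smul_eq_mul, mul_comm]
    induction e using Sym2.ind with
    | _ a b =>
      rw [filter_mem_sym2]
      rw [Finset.card_insert_of_notMem (by simp [hM.ne he]), Finset.card_singleton]
  · intro e he f hf hne
    simp only [Finset.disjoint_left, mem_filter, mem_univ, true_and]
    intro v hv hv'
    exact hM.2 e he f hf hne v ⟨hv, hv'⟩

/-! ### alternating sequences -/

noncomputable def aseq (M N : Finset (Sym2 V)) (w : V) : ℕ → Option V
  | 0 => some w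
  | n+1 => (aseq M N w n).bind (fun x => if Even n then pf M x else pf N x)

variable {w : V}

lemma aseq_zero : aseq M N w 0 = some w := rfl

lemma aseq_succ_of_some {n : ℕ} {x : V} (h : aseq M N w n = some x) :
    aseq M N w (n+1) = if Even n then pf M x else pf N x := by
  rw [aseq, h, Option.bind_some]

lemma aseq_step {n : ℕ} {y : V} (h : aseq M N w (n+1) = some y) :
    ∃ x, aseq M N w n = some x ∧ (if Even n then pf M x else pf N x) = some y := by
  rcases hn : aseq M N w n with _ | x
  · rw [aseq, hn] at h; simp at h
  · refine ⟨x, rfl, ?_⟩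
    rw [aseq, hn] at h
    simpa using h

lemma aseq_isSome_of_le {m n : ℕ} (hmn : m ≤ n) {x : V} (h : aseq M N w n = some x) :
    ∃ y, aseq M N w m = some y := by
  induction n generalizing x with
  | zero =>
    have : m = 0 := by omega
    subst this; exact ⟨x, h⟩
  | succ n IH =>
    rcases Nat.lt_or_ge m (n+1) with hm | hm
    · obtain ⟨z, hz, -⟩ := aseq_step h
      exact IH (by omega) hz
    · have : m = n+1 := by omega
      subst this; exact ⟨x, h⟩

lemma aseq_inj (hM : Mat G M) (hN : Mat G N) (hwN : ¬ cov N w) :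
    ∀ k j x, j < k → aseq M N w j = some x → aseq M N w k = some x → False := by
  intro k
  induction k using Nat.strong_induction_on with
  | _ k IH =>
  intro j x hjk hj hk
  obtain ⟨k', rfl⟩ : ∃ k', k = k' + 1 := ⟨k - 1, by omega⟩
  obtain ⟨z, hz, hzstep⟩ := aseq_step hk
  match j with
  | 0 =>
    have hwx : w = x := by
      have h0 := aseq_zero (M := M) (N := N) (w := w)
      rw [hj] at h0
      exact (Option.some_injective _ h0).symm
    by_cases hpk : Even k'
    · rw [if_pos hpk] at hzstep
      have hxz : pf M x = some z := pf_symm hM hzstep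
      have h1 : aseq M N w 1 = some z := by
        rw [aseq_succ_of_some (aseq_zero (M := M) (N := N) (w := w)),
          if_pos (by norm_num : Even 0), hwx]
        exact hxz
      cases k' with
      | zero =>
        have hzw : w = z := by
          have h0 := aseq_zero (M := M) (N := N) (w := w)
          rw [hz] at h0
          exact (Option.some_injective _ h0).symm
        have hxz' : x = z := hwx.symm.trans hzw
        exact pf_ne hM (hxz' ▸ hzstep) rfl
      | succ k2 =>
        cases k2 with
        | zero =>
          rw [Nat.even_iff] at hpk; omega
        | succ k3 =>
          exact IH (k3+2) (by omega) 1 z (by omega) h1 hz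
    · rw [if_neg hpk] at hzstep
      apply hwN
      rw [hwx]
      exact cov_iff_exists.2 ⟨z, mem_of_pf_eq_some (pf_symm hN hzstep)⟩
  | (j'+1) =>
    obtain ⟨y, hy, hystep⟩ := aseq_step hj
    by_cases hpj : Even j' <;> by_cases hpk : Even k'
    · rw [if_pos hpj] at hystep; rw [if_pos hpk] at hzstep
      have hyz : y = z := by
        have h1 := pf_symm hM hystep
        have h2 := pf_symm hM hzstep
        rw [h1] at h2; exact Option.some_injective _ h2
      subst hyz
      exact IH k' (by omega) j' y (by omega) hy hz
    · rw [if_pos hpj] at hystep; rw [if_neg hpk] at hzstep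
      have hxz : pf N x = some z := pf_symm hN hzstep
      rcases Nat.lt_or_ge (j'+2) (k'+1) with hlt | hge
      · have hj2 : aseq M N w (j'+2) = some z := by
          rw [aseq_succ_of_some hj, if_neg (by simp [Nat.even_add_one, hpj])]
          exact hxz
        rcases Nat.lt_trichotomy (j'+2) k' with h1 | h1 | h1
        · exact IH k' (by omega) (j'+2) z h1 hj2 hz
        · have : Even k' := h1 ▸ (hpj.add (by norm_num : Even 2))
          exact hpk this
        · exact IH (j'+2) (by omega) k' z h1 hz hj2
      · have hk'j : j' + 1 = k' := by omega
        subst hk'j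
        have hzx : z = x := by
          rw [hj] at hz; exact (Option.some_injective _ hz).symm
        subst hzx
        exact pf_ne hN hxz rfl
    · rw [if_neg hpj] at hystep; rw [if_pos hpk] at hzstep
      have hxz : pf M x = some z := pf_symm hM hzstep
      rcases Nat.lt_or_ge (j'+2) (k'+1) with hlt | hge
      · have hj2 : aseq M N w (j'+2) = some z := by
          rw [aseq_succ_of_some hj, if_pos (by simp [Nat.even_add_one, hpj])]
          exact hxz
        rcases Nat.lt_trichotomy (j'+2) k' with h1 | h1 | h1
        · exact IH k' (by omega) (j'+2) z h1 hj2 hz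
        · have h2 : Even (j'+2) := by rw [h1]; exact hpk
          have h3 : Even j' := by
            rcases h2 with ⟨t, ht⟩; exact ⟨t-1, by omega⟩
          exact hpj h3
        · exact IH (j'+2) (by omega) k' z h1 hz hj2
      · have hk'j : j' + 1 = k' := by omega
        subst hk'j
        have hzx : z = x := by
          rw [hj] at hz; exact (Option.some_injective _ hz).symm
        subst hzx
        exact pf_ne hM hxz rfl
    · rw [if_neg hpj] at hystep; rw [if_neg hpk] at hzstep
      have hyz : y = z := by
        have h1 := pf_symm hN hystep
        have h2 := pf_symm hN hzstep
        rw [h1] at h2; exact Option.some_injective _ h2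
      subst hyz
      exact IH k' (by omega) j' y (by omega) hy hz

lemma aseq_exists_none (hM : Mat G M) (hN : Mat G N) (hwN : ¬ cov N w) :
    ∃ L, aseq M N w L = none := by
  by_contra h
  push_neg at h
  have hs : ∀ n, ∃ x, aseq M N w n = some x := by
    intro n
    rcases hn : aseq M N w n with _ | x
    · exact absurd hn (h n)
    · exact ⟨x, rfl⟩
  obtain ⟨a, b, hab, heq⟩ := Finite.exists_ne_map_eq_of_infinite
    (fun n : ℕ => (hs n).choose)
  have ha := (hs a).choose_spec
  have hb := (hs b).choose_spec
  have hvv : (hs a).choose = (hs b).choose := by simpa using heq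
  rcases Nat.lt_or_ge a b with h' | h'
  · exact aseq_inj hM hN hwN b a _ h' ha (by rw [hb, hvv])
  · exact aseq_inj hM hN hwN a b _ (by omega) hb (by rw [ha, hvv])

/-! ### the alternating path -/

noncomputable def vtx (M N : Finset (Sym2 V)) (w : V) (n : ℕ) : V := (aseq M N w n).getD w

noncomputable def pE (M N : Finset (Sym2 V)) (w : V) (L : ℕ) : Finset (Sym2 V) :=
  (Finset.range (L-1)).image (fun i => s(vtx M N w i, vtx M N w (i+1)))

variable {L : ℕ}

lemma vtx_zero : vtx M N w 0 = w := by simp [vtx, aseq_zero]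

section path
variable (hM : Mat G M) (hN : Mat G N) (hwM : cov M w) (hwN : ¬ cov N w)
  (hL : aseq M N w L = none) (hlt : ∀ m, m < L → aseq M N w m ≠ none)

include hlt in
lemma aseq_eq_vtx : ∀ m, m < L → aseq M N w m = some (vtx M N w m) := by
  intro m hm
  rcases h : aseq M N w m with _ | x
  · exact absurd h (hlt m hm)
  · simp [vtx, h]

include hM hwM hL in
lemma two_le_L : 2 ≤ L := by
  rcases Nat.lt_or_ge L 2 with h | h
  · interval_cases L
    · rw [aseq_zero] at hL; simp at hL
    · obtain ⟨u, hu⟩ := cov_iff_exists.1 hwM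
      rw [aseq_succ_of_some (aseq_zero (M := M) (N := N) (w := w)),
        if_pos (by norm_num : Even 0), pf_eq_some_of_mem hM hu] at hL
      simp at hL
  · exact h

include hM hN hwN hlt in
lemma vtx_inj {i j : ℕ} (hi : i < L) (hj : j < L) (h : vtx M N w i = vtx M N w j) : i = j := by
  rcases Nat.lt_trichotomy i j with h' | h' | h'
  · exact absurd (aseq_inj hM hN hwN j i _ h' (aseq_eq_vtx hlt i hi)
      (h ▸ aseq_eq_vtx hlt j hj)) (by simp)
  · exact h'
  · exact absurd (aseq_inj hM hN hwN i j _ h' (aseq_eq_vtx hlt j hj)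
      (h ▸ aseq_eq_vtx hlt i hi)) (by simp)

include hlt in
lemma edge_mem_M {i : ℕ} (hi : i + 1 < L) (hp : Even i) :
    s(vtx M N w i, vtx M N w (i+1)) ∈ M := by
  have h1 := aseq_eq_vtx hlt (i+1) hi
  rw [aseq_succ_of_some (aseq_eq_vtx hlt i (by omega)), if_pos hp] at h1
  exact mem_of_pf_eq_some h1

include hlt in
lemma edge_mem_N {i : ℕ} (hi : i + 1 < L) (hp : ¬ Even i) :
    s(vtx M N w i, vtx M N w (i+1)) ∈ N := by
  have h1 := aseq_eq_vtx hlt (i+1) hi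
  rw [aseq_succ_of_some (aseq_eq_vtx hlt i (by omega)), if_neg hp] at h1
  exact mem_of_pf_eq_some h1

include hL hlt in
lemma terminal (hL1 : 1 ≤ L) :
    (if Even (L-1) then pf M (vtx M N w (L-1)) else pf N (vtx M N w (L-1))) = none := by
  have h0 : L - 1 + 1 = L := by omega
  have h1 := aseq_succ_of_some (aseq_eq_vtx hlt (L-1) (by omega))
  rw [h0, hL] at h1
  exact h1.symm

lemma mem_pE {e : Sym2 V} :
    e ∈ pE M N w L ↔ ∃ i, i < L - 1 ∧ e = s(vtx M N w i, vtx M N w (i+1)) := by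
  simp only [pE, Finset.mem_image, Finset.mem_range]
  constructor
  · rintro ⟨i, hi, rfl⟩; exact ⟨i, hi, rfl⟩
  · rintro ⟨i, hi, rfl⟩; exact ⟨i, hi, rfl⟩

include hM hN hwN hlt in
lemma pE_vertex {e : Sym2 V} {v : V} (he : e ∈ pE M N w L) (hv : v ∈ e) :
    ∃ i, i < L ∧ v = vtx M N w i := by
  obtain ⟨i, hi, rfl⟩ := mem_pE.1 he
  rcases Sym2.mem_iff'.1 hv with h | h
  · exact ⟨i, by omega, h⟩
  · exact ⟨i+1, by omega, h⟩

include hM hN hwN hL hlt in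
lemma M_edge_in_pE {e : Sym2 V} {i : ℕ} (hi : i < L) (he : e ∈ M)
    (hv : vtx M N w i ∈ e) : e ∈ pE M N w L := by
  obtain ⟨u, rfl⟩ := Sym2.mem_iff_exists.1 hv
  have hpf : pf M (vtx M N w i) = some u := pf_eq_some_of_mem hM he
  by_cases hp : Even i
  · rcases Nat.lt_or_ge (i+1) L with h1 | h1
    · have := aseq_eq_vtx hlt (i+1) h1
      rw [aseq_succ_of_some (aseq_eq_vtx hlt i hi), if_pos hp, hpf] at this
      have hu : u = vtx M N w (i+1) := Option.some_injective _ this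
      exact mem_pE.2 ⟨i, by omega, by rw [hu]⟩
    · have hi' : i = L - 1 := by omega
      have := terminal (M := M) (N := N) (w := w) hL hlt (by omega)
      rw [if_pos (hi' ▸ hp)] at this
      rw [hi'] at hpf
      rw [hpf] at this
      simp at this
  · have hi0 : i ≠ 0 := by rintro rfl; exact hp (by norm_num)
    obtain ⟨i', rfl⟩ : ∃ i', i = i' + 1 := ⟨i - 1, by omega⟩
    have hp' : Even i' := by simpa [Nat.even_add_one] using hp
    have h1 := aseq_eq_vtx hlt (i'+1) hi
    rw [aseq_succ_of_some (aseq_eq_vtx hlt i' (by omega)), if_pos hp'] at h1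
    have h2 : pf M (vtx M N w (i'+1)) = some (vtx M N w i') := pf_symm hM h1
    have hu : u = vtx M N w i' := by rw [hpf] at h2; exact Option.some_injective _ h2
    rw [hu, Sym2.eq_swap]
    exact mem_pE.2 ⟨i', by omega, rfl⟩

include hM hN hwN hL hlt in
lemma N_edge_in_pE {e : Sym2 V} {i : ℕ} (hi : i < L) (he : e ∈ N)
    (hv : vtx M N w i ∈ e) : e ∈ pE M N w L := by
  obtain ⟨u, rfl⟩ := Sym2.mem_iff_exists.1 hv
  have hpf : pf N (vtx M N w i) = some u := pf_eq_some_of_mem hN he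
  by_cases hp : Even i
  · rcases eq_or_ne i 0 with rfl | hi0
    · rw [vtx_zero] at hpf
      exact absurd (cov_iff_exists.2 ⟨u, mem_of_pf_eq_some hpf⟩) hwN
    · obtain ⟨i', rfl⟩ : ∃ i', i = i' + 1 := ⟨i - 1, by omega⟩
      have hp' : ¬ Even i' := by rw [Nat.even_add_one] at hp; exact hp
      have h1 := aseq_eq_vtx hlt (i'+1) hi
      rw [aseq_succ_of_some (aseq_eq_vtx hlt i' (by omega)), if_neg hp'] at h1
      have h2 : pf N (vtx M N w (i'+1)) = some (vtx M N w i') := pf_symm hN h1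
      have hu : u = vtx M N w i' := by rw [hpf] at h2; exact Option.some_injective _ h2
      rw [hu, Sym2.eq_swap]
      exact mem_pE.2 ⟨i', by omega, rfl⟩
  · rcases Nat.lt_or_ge (i+1) L with h1 | h1
    · have := aseq_eq_vtx hlt (i+1) h1
      rw [aseq_succ_of_some (aseq_eq_vtx hlt i hi), if_neg hp, hpf] at this
      have hu : u = vtx M N w (i+1) := Option.some_injective _ this
      exact mem_pE.2 ⟨i, by omega, by rw [hu]⟩
    · have hi' : i = L - 1 := by omega
      have := terminal (M := M) (N := N) (w := w) hL hlt (by omega)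
      rw [if_neg (hi' ▸ hp)] at this
      rw [hi'] at hpf
      rw [hpf] at this
      simp at this
end path

section path2
variable (hM : Mat G M) (hN : Mat G N) (hwM : cov M w) (hwN : ¬ cov N w)
  (hL : aseq M N w L = none) (hlt : ∀ m, m < L → aseq M N w m ≠ none)

include hM hN hwN hL hlt in
lemma even_edge_not_N {i : ℕ} (hi : i < L - 1) (hp : Even i) :
    s(vtx M N w i, vtx M N w (i+1)) ∉ N := by
  intro hmem
  have hpf : pf N (vtx M N w (i+1)) = some (vtx M N w i) :=
    pf_eq_some_of_mem hN (Sym2.eq_swap ▸ hmem)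
  have hp1 : ¬ Even (i+1) := by simp [Nat.even_add_one, hp]
  rcases Nat.lt_or_ge (i+2) L with h1 | h1
  · have h2 := aseq_eq_vtx hlt (i+2) h1
    rw [aseq_succ_of_some (aseq_eq_vtx hlt (i+1) (by omega)), if_neg hp1, hpf] at h2
    have := vtx_inj hM hN hwN hlt (show i < L by omega) (show i+2 < L by omega)
      (Option.some_injective _ h2)
    omega
  · have hi' : i + 1 = L - 1 := by omega
    have hterm := terminal (M := M) (N := N) (w := w) hL hlt (by omega)
    rw [if_neg (hi' ▸ hp1)] at hterm
    rw [hi'] at hpf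
    rw [hpf] at hterm
    simp at hterm

include hM hN hwN hL hlt in
lemma odd_edge_not_M {i : ℕ} (hi : i < L - 1) (hp : ¬ Even i) :
    s(vtx M N w i, vtx M N w (i+1)) ∉ M := by
  intro hmem
  have hpf : pf M (vtx M N w (i+1)) = some (vtx M N w i) :=
    pf_eq_some_of_mem hM (Sym2.eq_swap ▸ hmem)
  have hp1 : Even (i+1) := by simpa [Nat.even_add_one] using hp
  rcases Nat.lt_or_ge (i+2) L with h1 | h1
  · have h2 := aseq_eq_vtx hlt (i+2) h1
    rw [aseq_succ_of_some (aseq_eq_vtx hlt (i+1) (by omega)), if_pos hp1, hpf] at h2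
    have := vtx_inj hM hN hwN hlt (show i < L by omega) (show i+2 < L by omega)
      (Option.some_injective _ h2)
    omega
  · have hi' : i + 1 = L - 1 := by omega
    have hterm := terminal (M := M) (N := N) (w := w) hL hlt (by omega)
    rw [if_pos (hi' ▸ hp1)] at hterm
    rw [hi'] at hpf
    rw [hpf] at hterm
    simp at hterm

include hlt in
lemma cov_M_of_lt {i : ℕ} (hi : i < L - 1) : cov M (vtx M N w i) := by
  by_cases hp : Even i
  · exact ⟨_, edge_mem_M hlt (by omega) hp, by simp⟩
  · have hi0 : i ≠ 0 := by rintro rfl; exact hp (by norm_num)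
    obtain ⟨i', rfl⟩ : ∃ i', i = i' + 1 := ⟨i - 1, by omega⟩
    have hp' : Even i' := by simpa [Nat.even_add_one] using hp
    exact ⟨_, edge_mem_M hlt (by omega) hp', by simp⟩

include hM hN hwN hlt in
lemma card_pE (hL2 : 2 ≤ L) : (pE M N w L).card = L - 1 := by
  rw [pE, Finset.card_image_of_injOn, Finset.card_range]
  intro i hi j hj hij
  simp only [Finset.mem_coe, Finset.mem_range] at hi hj
  rcases (Sym2.mk_eq_mk_iff (p := (vtx M N w i, vtx M N w (i+1))) (q := (vtx M N w j, vtx M N w (j+1)))).1 hij with h | h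
  · exact vtx_inj hM hN hwN hlt (by omega) (by omega) (congrArg Prod.fst h)
  · have h1 : vtx M N w i = vtx M N w (j+1) := congrArg Prod.fst h
    have h2 : vtx M N w (i+1) = vtx M N w j := congrArg Prod.snd h
    have e1 := vtx_inj hM hN hwN hlt (show i < L by omega) (show j+1 < L by omega) h1
    have e2 := vtx_inj hM hN hwN hlt (show i+1 < L by omega) (show j < L by omega) h2
    omega

include hM hN hwN hL hlt in
lemma M_inter_pE :
    M ∩ pE M N w L =
      ((Finset.range (L-1)).filter (fun i => Even i)).image
        (fun i => s(vtx M N w i, vtx M N w (i+1))) := by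
  ext e
  simp only [Finset.mem_inter, Finset.mem_image, Finset.mem_filter, Finset.mem_range]
  constructor
  · rintro ⟨heM, hepE⟩
    obtain ⟨i, hi, rfl⟩ := mem_pE.1 hepE
    by_cases hp : Even i
    · exact ⟨i, ⟨hi, hp⟩, rfl⟩
    · exact absurd heM (odd_edge_not_M hM hN hwN hL hlt hi hp)
  · rintro ⟨i, ⟨hi, hp⟩, rfl⟩
    exact ⟨edge_mem_M hlt (by omega) hp, mem_pE.2 ⟨i, hi, rfl⟩⟩

include hM hN hwN hL hlt in
lemma N_inter_pE :
    N ∩ pE M N w L =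
      ((Finset.range (L-1)).filter (fun i => ¬ Even i)).image
        (fun i => s(vtx M N w i, vtx M N w (i+1))) := by
  ext e
  simp only [Finset.mem_inter, Finset.mem_image, Finset.mem_filter, Finset.mem_range]
  constructor
  · rintro ⟨heN, hepE⟩
    obtain ⟨i, hi, rfl⟩ := mem_pE.1 hepE
    by_cases hp : Even i
    · exact absurd heN (even_edge_not_N hM hN hwN hL hlt hi hp)
    · exact ⟨i, ⟨hi, hp⟩, rfl⟩
  · rintro ⟨i, ⟨hi, hp⟩, rfl⟩
    exact ⟨edge_mem_N hlt (by omega) hp, mem_pE.2 ⟨i, hi, rfl⟩⟩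

lemma card_evens (m : ℕ) : ((Finset.range m).filter (fun i => Even i)).card = (m+1)/2 := by
  induction m with
  | zero => simp
  | succ m IH =>
    rw [Finset.range_add_one, Finset.filter_insert]
    by_cases h : Even m
    · rw [if_pos h, Finset.card_insert_of_notMem (by simp), IH]
      rcases h with ⟨t, rfl⟩
      omega
    · rw [if_neg h, IH]
      have : m % 2 = 1 := Nat.not_even_iff.1 h
      omega

lemma card_odds (m : ℕ) : ((Finset.range m).filter (fun i => ¬ Even i)).card = m/2 := by
  have h1 := Finset.card_filter_add_card_filter_not
    (s := Finset.range m) (p := fun i => Even i)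
  simp only [Finset.card_range] at h1
  have h2 := card_evens m
  omega

include hM hN hwN hlt in
lemma vtx_inj_image_card {P : Finset ℕ} (hP : P ⊆ Finset.range (L-1)) :
    (P.image (fun i => s(vtx M N w i, vtx M N w (i+1)))).card = P.card := by
  rw [Finset.card_image_of_injOn]
  intro i hi j hj hij
  have hi' := Finset.mem_range.1 (hP hi)
  have hj' := Finset.mem_range.1 (hP hj)
  rcases (Sym2.mk_eq_mk_iff (p := (vtx M N w i, vtx M N w (i+1))) (q := (vtx M N w j, vtx M N w (j+1)))).1 hij with h | h
  · exact vtx_inj hM hN hwN hlt (by omega) (by omega) (congrArg Prod.fst h)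
  · have h1 : vtx M N w i = vtx M N w (j+1) := congrArg Prod.fst h
    have h2 : vtx M N w (i+1) = vtx M N w j := congrArg Prod.snd h
    have e1 := vtx_inj hM hN hwN hlt (show i < L by omega) (show j+1 < L by omega) h1
    have e2 := vtx_inj hM hN hwN hlt (show i+1 < L by omega) (show j < L by omega) h2
    omega

include hM hN hwN hL hlt in
lemma card_M_inter_pE : (M ∩ pE M N w L).card = L / 2 := by
  rw [M_inter_pE hM hN hwN hL hlt,
    vtx_inj_image_card hM hN hwN hlt (Finset.filter_subset _ _), card_evens]
  rcases Nat.even_or_odd L with ⟨t, rfl⟩ | ⟨t, rfl⟩ <;> omega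

include hM hN hwN hL hlt in
lemma card_N_inter_pE : (N ∩ pE M N w L).card = (L-1) / 2 := by
  rw [N_inter_pE hM hN hwN hL hlt,
    vtx_inj_image_card hM hN hwN hlt (Finset.filter_subset _ _), card_odds]

end path2

/-! ### the swap construction -/

lemma swap_mat {A B P : Finset (Sym2 V)} (hA : Mat G A) (hB : Mat G B)
    (hkey : ∀ e ∈ A, ∀ v : V, v ∈ e → (∃ f ∈ P, v ∈ f) → e ∈ P) :
    Mat G ((A \ P) ∪ (B ∩ P)) := by
  constructor
  · intro e he
    rcases Finset.mem_union.1 he with h | h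
    · exact hA.1 (Finset.mem_sdiff.1 h).1
    · exact hB.1 (Finset.mem_inter.1 h).1
  · intro e he f hf hef v hv
    rcases Finset.mem_union.1 he with h1 | h1 <;> rcases Finset.mem_union.1 hf with h2 | h2
    · exact hA.2 e (Finset.mem_sdiff.1 h1).1 f (Finset.mem_sdiff.1 h2).1 hef v hv
    · rw [Finset.mem_sdiff] at h1; rw [Finset.mem_inter] at h2
      exact h1.2 (hkey e h1.1 v hv.1 ⟨f, h2.2, hv.2⟩)
    · rw [Finset.mem_sdiff] at h2; rw [Finset.mem_inter] at h1
      exact h2.2 (hkey f h2.1 v hv.2 ⟨e, h1.2, hv.1⟩)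
    · exact hB.2 e (Finset.mem_inter.1 h1).1 f (Finset.mem_inter.1 h2).1 hef v hv

lemma swap_card {A B P : Finset (Sym2 V)} :
    ((A \ P) ∪ (B ∩ P)).card = A.card - (A ∩ P).card + (B ∩ P).card := by
  rw [Finset.card_union_of_disjoint, ← Finset.sdiff_inter_self_left,
    Finset.card_sdiff_of_subset Finset.inter_subset_left]
  rw [Finset.disjoint_left]
  intro e he he'
  exact (Finset.mem_sdiff.1 he).2 (Finset.mem_inter.1 he').2

lemma swap_cov {A B P : Finset (Sym2 V)} {v : V} (h : cov ((A \ P) ∪ (B ∩ P)) v) :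
    cov A v ∨ cov B v := by
  obtain ⟨e, he, hv⟩ := h
  rcases Finset.mem_union.1 he with h1 | h1
  · exact Or.inl ⟨e, (Finset.mem_sdiff.1 h1).1, hv⟩
  · exact Or.inr ⟨e, (Finset.mem_inter.1 h1).1, hv⟩

lemma alternating (hM : Mat G M) (hN : Mat G N) (hwM : cov M w) (hwN : ¬ cov N w) :
    (∃ N', Mat G N' ∧ (∀ v, cov N' v → cov M v ∨ cov N v) ∧ N'.card = N.card + 1) ∨
    (∃ M2, Mat G M2 ∧ (∀ v, cov M2 v → cov M v ∨ cov N v) ∧ M2.card = M.card ∧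
      ¬ cov M2 w ∧ ∃ x, ¬ cov M x ∧ x ≠ w ∧ ∀ y, ¬ cov M y → y ≠ x → ¬ cov M2 y) := by
  have hex := aseq_exists_none hM hN hwN
  set L := Nat.find hex with hLdef
  have hL : aseq M N w L = none := Nat.find_spec hex
  have hlt : ∀ m, m < L → aseq M N w m ≠ none := fun m hm => Nat.find_min hex hm
  have hL2 : 2 ≤ L := two_le_L hM hwM hL
  have hMc := card_M_inter_pE hM hN hwN hL hlt
  have hNc := card_N_inter_pE hM hN hwN hL hlt
  have hMle : (M ∩ pE M N w L).card ≤ M.card := Finset.card_le_card Finset.inter_subset_left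
  have hNle : (N ∩ pE M N w L).card ≤ N.card := Finset.card_le_card Finset.inter_subset_left
  have hkeyM : ∀ e ∈ M, ∀ v : V, v ∈ e → (∃ f ∈ pE M N w L, v ∈ f) → e ∈ pE M N w L := by
    rintro e he v hv ⟨f, hf, hvf⟩
    obtain ⟨i, hi, rfl⟩ := pE_vertex hM hN hwN hlt hf hvf
    exact M_edge_in_pE hM hN hwN hL hlt hi he hv
  have hkeyN : ∀ e ∈ N, ∀ v : V, v ∈ e → (∃ f ∈ pE M N w L, v ∈ f) → e ∈ pE M N w L := by
    rintro e he v hv ⟨f, hf, hvf⟩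
    obtain ⟨i, hi, rfl⟩ := pE_vertex hM hN hwN hlt hf hvf
    exact N_edge_in_pE hM hN hwN hL hlt hi he hv
  by_cases hpar : Even (L - 1)
  · -- even case: same-size swap exposing w
    right
    refine ⟨(M \ pE M N w L) ∪ (N ∩ pE M N w L), swap_mat hM hN hkeyM,
      fun v => swap_cov, ?_, ?_, ?_⟩
    · rw [swap_card, hMc, hNc]
      obtain ⟨t, ht⟩ := hpar
      omega
    · rintro ⟨e, he, hv⟩
      rcases Finset.mem_union.1 he with h1 | h1
      · rw [Finset.mem_sdiff] at h1
        exact h1.2 (M_edge_in_pE hM hN hwN hL hlt (show 0 < L by omega) h1.1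
          (vtx_zero (M := M) (N := N) (w := w) ▸ hv))
      · exact hwN ⟨e, (Finset.mem_inter.1 h1).1, hv⟩
    · refine ⟨vtx M N w (L-1), ?_, ?_, ?_⟩
      · apply pf_eq_none_iff.1
        have := terminal (M := M) (N := N) (w := w) hL hlt (by omega)
        rwa [if_pos hpar] at this
      · intro h
        have h0 : vtx M N w (L-1) = vtx M N w 0 := by rw [h, vtx_zero]
        have := vtx_inj hM hN hwN hlt (show L-1 < L by omega) (show 0 < L by omega) h0
        omega
      · intro y hyM hyx
        rintro ⟨e, he, hv⟩
        rcases Finset.mem_union.1 he with h1 | h1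
        · exact hyM ⟨e, (Finset.mem_sdiff.1 h1).1, hv⟩
        · rw [Finset.mem_inter] at h1
          obtain ⟨i, hi, rfl⟩ := pE_vertex hM hN hwN hlt h1.2 hv
          rcases Nat.lt_or_ge i (L-1) with h2 | h2
          · exact hyM (cov_M_of_lt hlt h2)
          · have : i = L - 1 := by omega
            exact hyx (by rw [this])
  · -- odd case: augmenting, contradicting maximality of N
    left
    refine ⟨(N \ pE M N w L) ∪ (M ∩ pE M N w L), swap_mat hN hM hkeyN,
      fun v h => (swap_cov h).symm, ?_⟩
    rw [swap_card, hNc, hMc]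
    have : (L-1) % 2 = 1 := Nat.not_even_iff.1 hpar
    omega
/-! ### Gallai's lemma -/

variable {G : SimpleGraph V}

lemma matIn_insert {S : Finset V} {M : Finset (Sym2 V)} {u v : V}
    (hM : MatIn G S M) (hu : u ∈ S) (hv : v ∈ S) (hadj : G.Adj u v)
    (hcu : ¬ cov M u) (hcv : ¬ cov M v) :
    MatIn G S (insert s(u,v) M) ∧ (insert s(u,v) M).card = M.card + 1 := by
  have hnm : s(u,v) ∉ M := fun h => hcu ⟨_, h, by simp⟩
  refine ⟨⟨⟨?_, ?_⟩, ?_⟩, Finset.card_insert_of_notMem hnm⟩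
  · intro e he
    rcases Finset.mem_insert.1 he with rfl | h
    · exact hadj
    · exact hM.1.1 h
  · intro e he f hf hef x hx
    rcases Finset.mem_insert.1 he with rfl | h1 <;> rcases Finset.mem_insert.1 hf with rfl | h2
    · exact hef rfl
    · rcases Sym2.mem_iff'.1 hx.1 with rfl | rfl
      · exact hcu ⟨f, h2, hx.2⟩
      · exact hcv ⟨f, h2, hx.2⟩
    · rcases Sym2.mem_iff'.1 hx.2 with rfl | rfl
      · exact hcu ⟨e, h1, hx.1⟩
      · exact hcv ⟨e, h1, hx.1⟩
    · exact hM.1.2 e h1 f h2 hef x hx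
  · intro e he x hx
    rcases Finset.mem_insert.1 he with rfl | h
    · rcases Sym2.mem_iff'.1 hx with rfl | rfl
      · exact hu
      · exact hv
    · exact hM.2 e h x hx

lemma exposed_pair {S : Finset V} {M : Finset (Sym2 V)} (hM : MatIn G S M)
    (hcard : 2 * M.card + 2 ≤ S.card) :
    ∃ u ∈ S, ∃ v ∈ S, u ≠ v ∧ ¬ cov M u ∧ ¬ cov M v := by
  have hsub : Finset.univ.filter (fun v => cov M v) = S.filter (fun v => cov M v) := by
    ext x
    simp only [Finset.mem_filter, Finset.mem_univ, true_and]
    constructor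
    · rintro h
      refine ⟨?_, h⟩
      obtain ⟨e, he, hx⟩ := h
      exact hM.2 e he x hx
    · exact fun h => h.2
  have h1 : (S.filter (fun v => cov M v)).card = 2 * M.card := by
    rw [← hsub, card_supp hM.1]
  have h2 := Finset.card_filter_add_card_filter_not
    (s := S) (p := fun v => cov M v)
  have h3 : 1 < (S.filter (fun v => ¬ cov M v)).card := by omega
  obtain ⟨u, hu, v, hv, huv⟩ := Finset.one_lt_card.1 h3
  rw [Finset.mem_filter] at hu hv
  exact ⟨u, hu.1, v, hv.1, huv, hu.2, hv.2⟩

lemma gallai {S : Finset V}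
    (hadj : ∀ u ∈ S, ∀ v : V, G.Adj u v → v ∈ S)
    (hreach : ∀ u ∈ S, ∀ v ∈ S, G.Reachable u v)
    (hyp : ∀ x ∈ S, ∃ M, MatIn G S M ∧ M.card = nuIn G S ∧ ¬ cov M x) :
    S.card ≤ 2 * nuIn G S + 1 := by
  by_contra hcon
  push_neg at hcon
  set ν := nuIn G S with hν
  -- bad pairs
  set D : Set (V × V) := {p | p.1 ∈ S ∧ p.2 ∈ S ∧ p.1 ≠ p.2 ∧
    ∃ M, MatIn G S M ∧ M.card = ν ∧ ¬ cov M p.1 ∧ ¬ cov M p.2} with hD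
  have hDne : D.Nonempty := by
    obtain ⟨M, hM, hMc⟩ := exists_max_matching (G := G) (S := S)
    obtain ⟨u, hu, v, hv, huv, hcu, hcv⟩ := exposed_pair hM (by omega)
    exact ⟨(u, v), hu, hv, huv, M, hM, hMc, hcu, hcv⟩
  have hdne : ((fun p : V × V => G.dist p.1 p.2) '' D).Nonempty := hDne.image _
  set d0 := sInf ((fun p : V × V => G.dist p.1 p.2) '' D) with hd0
  obtain ⟨⟨u, v⟩, hpD, hpd⟩ := Nat.sInf_mem hdne
  rw [← hd0] at hpd
  obtain ⟨huS, hvS, huv, M, hM, hMc, hcu, hcv⟩ := hpD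
  simp only at hpd huv hcu hcv
  have hle : ∀ p ∈ D, d0 ≤ G.dist p.1 p.2 := fun p hp => Nat.sInf_le ⟨p, hp, rfl⟩
  have hruv : G.Reachable u v := hreach u huS v hvS
  have hd0pos : 0 < d0 := by rw [← hpd]; exact hruv.pos_dist_of_ne huv
  have hd0ne1 : d0 ≠ 1 := by
    intro h1
    have hadjuv : G.Adj u v := SimpleGraph.dist_eq_one_iff_adj.1 (hpd.trans h1)
    obtain ⟨hMi, hcard⟩ := matIn_insert hM huS hvS hadjuv hcu hcv
    have := card_le_nuIn hMi
    omega
  have hd02 : 2 ≤ d0 := by omega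
  -- middle vertex
  obtain ⟨p, hplen⟩ := hruv.exists_walk_length_eq_dist
  obtain ⟨w, hadjuw, q, rfl⟩ := SimpleGraph.Walk.exists_eq_cons_of_ne huv p
  have hwS : w ∈ S := hadj u huS w hadjuw
  have hdux : G.dist u w = 1 := by
    have h1 : G.dist u w ≤ 1 := SimpleGraph.dist_le (hadjuw.toWalk)
    have h2 : 0 < G.dist u w := (hreach u huS w hwS).pos_dist_of_ne hadjuw.ne
    omega
  have hdwv : G.dist w v ≤ d0 - 1 := by
    have h1 : G.dist w v ≤ q.length := SimpleGraph.dist_le q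
    simp only [SimpleGraph.Walk.length_cons] at hplen
    omega
  have hwu : w ≠ u := hadjuw.ne.symm
  have hwv : w ≠ v := by
    intro h
    subst h
    omega
  -- w is covered by M
  have hwcov : cov M w := by
    by_contra hwm
    have : (u, w) ∈ D := ⟨huS, hwS, hadjuw.ne, M, hM, hMc, hcu, hwm⟩
    have := hle _ this
    rw [hdux] at this
    omega
  -- matching missing w
  obtain ⟨N, hN, hNc, hwN⟩ := hyp w hwS
  rcases alternating hM.1 hN.1 hwcov hwN with ⟨N', hN', hcovN', hcardN'⟩ |
    ⟨M2, hM2, hcovM2, hcardM2, hM2w, x, hxM, hxw, hswap⟩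
  · -- augmenting: contradiction
    have hNi : MatIn G S N' := by
      refine ⟨hN', ?_⟩
      intro e he z hz
      rcases hcovN' z ⟨e, he, hz⟩ with h | h
      · obtain ⟨f, hf, hzf⟩ := h; exact hM.2 f hf z hzf
      · obtain ⟨f, hf, hzf⟩ := h; exact hN.2 f hf z hzf
    have := card_le_nuIn hNi
    omega
  · have hM2i : MatIn G S M2 := by
      refine ⟨hM2, ?_⟩
      intro e he z hz
      rcases hcovM2 z ⟨e, he, hz⟩ with h | h
      · obtain ⟨f, hf, hzf⟩ := h; exact hM.2 f hf z hzf
      · obtain ⟨f, hf, hzf⟩ := h; exact hN.2 f hf z hzf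
    rcases eq_or_ne x u with rfl | hxu
    · -- M2 misses v and w
      have hv' : ¬ cov M2 v := hswap v hcv (fun h => huv h.symm)
      have : (w, v) ∈ D := ⟨hwS, hvS, hwv, M2, hM2i, hcardM2.trans hMc, hM2w, hv'⟩
      have := hle _ this
      simp only at this
      omega
    · -- M2 misses u and w
      have hu' : ¬ cov M2 u := hswap u hcu (Ne.symm hxu)
      have : (u, w) ∈ D := ⟨huS, hwS, hadjuw.ne, M2, hM2i, hcardM2.trans hMc, hu', hM2w⟩
      have := hle _ this
      simp only at this
      rw [hdux] at this
      omega
/-! ### components -/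

noncomputable def EF (G : SimpleGraph V) : Finset (Sym2 V) :=
  Finset.univ.filter (· ∈ G.edgeSet)

lemma mem_EF {e : Sym2 V} : e ∈ EF G ↔ e ∈ G.edgeSet := by simp [EF]

noncomputable def degF (G : SimpleGraph V) (v : V) : ℕ :=
  (Finset.univ.filter (fun u => G.Adj v u)).card

noncomputable def ecomp (G : SimpleGraph V) (e : Sym2 V) : G.ConnectedComponent :=
  G.connectedComponentMk e.out.1

lemma ecomp_eq_of_mem {e : Sym2 V} (he : e ∈ G.edgeSet) {v : V} (hv : v ∈ e) :
    G.connectedComponentMk v = ecomp G e := by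
  obtain ⟨y, hy⟩ := Sym2.mem_iff_exists.1 (Sym2.out_fst_mem e)
  have hadj : G.Adj e.out.1 y := by rwa [← SimpleGraph.mem_edgeSet, ← hy]
  rw [hy] at hv
  rcases Sym2.mem_iff'.1 hv with rfl | rfl
  · rfl
  · exact SimpleGraph.ConnectedComponent.sound hadj.symm.reachable

lemma card_filter_mem_edge {e : Sym2 V} (he : e ∈ G.edgeSet) :
    (Finset.univ.filter (· ∈ e)).card = 2 := by
  induction e using Sym2.ind with
  | _ a b =>
    have hne : a ≠ b := ((SimpleGraph.mem_edgeSet G).1 he).ne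
    rw [filter_mem_sym2, Finset.card_insert_of_notMem (by simp [hne]),
      Finset.card_singleton]

section comps
variable {K : G.ConnectedComponent}

lemma mem_suppF {v : V} : v ∈ K.supp.toFinset ↔ G.connectedComponentMk v = K := by
  rw [Set.mem_toFinset]; exact SimpleGraph.ConnectedComponent.mem_supp_iff K v

lemma supp_closed {e : Sym2 V} (he : e ∈ G.edgeSet) {v : V} (hv : v ∈ e)
    (hvS : v ∈ K.supp.toFinset) {u : V} (hu : u ∈ e) : u ∈ K.supp.toFinset := by
  rw [mem_suppF] at hvS ⊢
  rw [ecomp_eq_of_mem he hu, ← ecomp_eq_of_mem he hv, hvS]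

/-- restriction of a global matching to a component -/
lemma restrict_matching {M : Finset (Sym2 V)} (hM : MatIn G Finset.univ M)
    (hMc : M.card = nu G) (K : G.ConnectedComponent) :
    MatIn G K.supp.toFinset (M.filter (fun e => ∀ v ∈ e, v ∈ K.supp.toFinset)) ∧
    (M.filter (fun e => ∀ v ∈ e, v ∈ K.supp.toFinset)).card = nuIn G K.supp.toFinset := by
  set MK := M.filter (fun e => ∀ v ∈ e, v ∈ K.supp.toFinset) with hMK
  have hMKi : MatIn G K.supp.toFinset MK := by
    refine ⟨⟨?_, ?_⟩, ?_⟩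
    · intro e he
      exact hM.1.1 (Finset.mem_coe.2 (Finset.mem_filter.1 (Finset.mem_coe.1 he)).1)
    · intro e he f hf hef v hv
      exact hM.1.2 e (Finset.mem_filter.1 he).1 f (Finset.mem_filter.1 hf).1 hef v hv
    · intro e he v hv
      exact (Finset.mem_filter.1 he).2 v hv
  refine ⟨hMKi, le_antisymm (card_le_nuIn hMKi) ?_⟩
  by_contra hlt
  push_neg at hlt
  obtain ⟨NK, hNK, hNKc⟩ := exists_max_matching (G := G) (S := K.supp.toFinset)
  -- edges of M outside MK avoid the component entirely
  have houts : ∀ e ∈ M \ MK, ∀ v ∈ e, v ∉ K.supp.toFinset := by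
    intro e he v hv hvS
    rw [Finset.mem_sdiff, hMK, Finset.mem_filter] at he
    exact he.2 ⟨he.1, fun u hu => supp_closed (hM.1.1 he.1) hv hvS hu⟩
  have hdisj : Disjoint (M \ MK) NK := by
    rw [Finset.disjoint_left]
    intro e he he'
    obtain ⟨y, hy⟩ := Sym2.mem_iff_exists.1 (Sym2.out_fst_mem e)
    exact houts e he _ (Sym2.out_fst_mem e) (hNK.2 e he' _ (Sym2.out_fst_mem e))
  have hunion : MatIn G Finset.univ ((M \ MK) ∪ NK) := by
    refine ⟨⟨?_, ?_⟩, fun e _ v _ => Finset.mem_univ v⟩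
    · intro e he
      rcases Finset.mem_union.1 (Finset.mem_coe.1 he) with h | h
      · exact hM.1.1 (Finset.mem_coe.2 (Finset.mem_sdiff.1 h).1)
      · exact hNK.1.1 (Finset.mem_coe.2 h)
    · intro e he f hf hef v hv
      rcases Finset.mem_union.1 he with h1 | h1 <;> rcases Finset.mem_union.1 hf with h2 | h2
      · exact hM.1.2 e (Finset.mem_sdiff.1 h1).1 f (Finset.mem_sdiff.1 h2).1 hef v hv
      · exact houts e h1 v hv.1 (hNK.2 f h2 v hv.2)
      · exact houts f h2 v hv.2 (hNK.2 e h1 v hv.1)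
      · exact hNK.1.2 e h1 f h2 hef v hv
  have hcard : ((M \ MK) ∪ NK).card = M.card - MK.card + NK.card := by
    rw [Finset.card_union_of_disjoint hdisj, Finset.card_sdiff_of_subset (Finset.filter_subset _ _)]
  have hKle : MK.card ≤ M.card := Finset.card_le_card (Finset.filter_subset _ _)
  have := card_le_nuIn hunion
  rw [hcard, show nuIn G Finset.univ = nu G from rfl] at this
  omega

lemma sum_nuIn_le :
    ∑ K ∈ (Finset.univ : Finset G.ConnectedComponent), nuIn G K.supp.toFinset ≤ nu G := by
  classical
  choose MK hMK hMKc using fun K : G.ConnectedComponent =>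
    exists_max_matching (G := G) (S := K.supp.toFinset)
  have hvcomp : ∀ (K : G.ConnectedComponent) (e : Sym2 V), e ∈ MK K → ∀ v ∈ e,
      G.connectedComponentMk v = K := by
    intro K e he v hv
    exact mem_suppF.1 ((hMK K).2 e he v hv)
  have hdisj : ∀ (K K' : G.ConnectedComponent), K ≠ K' →
      Disjoint (MK K) (MK K') := by
    intro K K' hne
    rw [Finset.disjoint_left]
    intro e he he'
    have h1 := hvcomp K e he _ (Sym2.out_fst_mem e)
    have h2 := hvcomp K' e he' _ (Sym2.out_fst_mem e)
    exact hne (h1.symm.trans h2)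
  have hunion : MatIn G Finset.univ (Finset.univ.biUnion MK) := by
    refine ⟨⟨?_, ?_⟩, fun e _ v _ => Finset.mem_univ v⟩
    · intro e he
      obtain ⟨K, -, hK⟩ := Finset.mem_biUnion.1 (Finset.mem_coe.1 he)
      exact (hMK K).1.1 (Finset.mem_coe.2 hK)
    · intro e he f hf hef v hv
      obtain ⟨K, -, hK⟩ := Finset.mem_biUnion.1 he
      obtain ⟨K', -, hK'⟩ := Finset.mem_biUnion.1 hf
      rcases eq_or_ne K K' with rfl | hne
      · exact (hMK K).1.2 e hK f hK' hef v hv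
      · have h1 := hvcomp K e hK v hv.1
        have h2 := hvcomp K' f hK' v hv.2
        exact hne (h1.symm.trans h2)
  have hcard := Finset.card_biUnion
    (s := (Finset.univ : Finset G.ConnectedComponent)) (t := MK)
    (fun K _ K' _ h => hdisj K K' h)
  calc ∑ K ∈ (Finset.univ : Finset G.ConnectedComponent), nuIn G K.supp.toFinset
      = ∑ K ∈ (Finset.univ : Finset G.ConnectedComponent), (MK K).card := by
        exact Finset.sum_congr rfl (fun K _ => (hMKc K).symm)
    _ = (Finset.univ.biUnion MK).card := hcard.symm
    _ ≤ nu G := card_le_nuIn hunion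

lemma edge_sum :
    (EF G).card = ∑ K ∈ (Finset.univ : Finset G.ConnectedComponent),
      ((EF G).filter (fun e => ecomp G e = K)).card := by
  exact Finset.card_eq_sum_card_fiberwise (fun e _ => Finset.mem_univ _)

lemma degF_eq_card_incidence (v : V) :
    degF G v = ((EF G).filter (fun e => v ∈ e)).card := by
  rw [degF]
  apply Finset.card_bij (fun u _ => s(v, u))
  · intro u hu
    rw [Finset.mem_filter] at hu ⊢
    refine ⟨mem_EF.2 ((SimpleGraph.mem_edgeSet G).2 hu.2), by simp⟩
  · intro u hu u' hu' h
    rw [Finset.mem_filter] at hu hu'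
    rcases (Sym2.mk_eq_mk_iff (p := (v,u)) (q := (v,u'))).1 h with h' | h'
    · exact (Prod.ext_iff.1 h').2
    · have h1 : v = u' := (Prod.ext_iff.1 h').1
      have h2 : u = v := (Prod.ext_iff.1 h').2
      rw [h2, h1]
  · intro e he
    rw [Finset.mem_filter] at he
    obtain ⟨u, rfl⟩ := Sym2.mem_iff_exists.1 he.2
    exact ⟨u, Finset.mem_filter.2 ⟨Finset.mem_univ u,
      (SimpleGraph.mem_edgeSet G).1 (mem_EF.1 he.1)⟩, rfl⟩

lemma comp_degree_sum (K : G.ConnectedComponent) :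
    2 * ((EF G).filter (fun e => ecomp G e = K)).card
      = ∑ v ∈ K.supp.toFinset, degF G v := by
  have h1 : ∑ v ∈ K.supp.toFinset, degF G v
      = ∑ e ∈ EF G, (K.supp.toFinset.filter (· ∈ e)).card := by
    rw [Finset.sum_congr rfl (fun v _ => degF_eq_card_incidence v)]
    simp only [Finset.card_filter]
    rw [Finset.sum_comm]
  rw [h1, ← Finset.sum_filter_add_sum_filter_not (EF G) (fun e => ecomp G e = K)]
  have h2 : ∀ e ∈ (EF G).filter (fun e => ecomp G e = K),
      (K.supp.toFinset.filter (· ∈ e)).card = 2 := by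
    intro e he
    rw [Finset.mem_filter] at he
    have hsub : K.supp.toFinset.filter (· ∈ e) = Finset.univ.filter (· ∈ e) := by
      ext v
      simp only [Finset.mem_filter, Finset.mem_univ, true_and]
      refine ⟨fun h => h.2, fun h => ⟨?_, h⟩⟩
      rw [mem_suppF, ecomp_eq_of_mem (mem_EF.1 he.1) h, he.2]
    rw [hsub, card_filter_mem_edge (mem_EF.1 he.1)]
  have h3 : ∀ e ∈ (EF G).filter (fun e => ¬ ecomp G e = K),
      (K.supp.toFinset.filter (· ∈ e)).card = 0 := by
    intro e he
    rw [Finset.mem_filter] at he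
    rw [Finset.card_eq_zero, Finset.filter_eq_empty_iff]
    intro v hv hve
    exact he.2 ((ecomp_eq_of_mem (mem_EF.1 he.1) hve) ▸ mem_suppF.1 hv)
  rw [Finset.sum_congr rfl h2, Finset.sum_congr rfl h3]
  simp [mul_comm]

lemma comp_clique_bound (K : G.ConnectedComponent) :
    ((EF G).filter (fun e => ecomp G e = K)).card ≤ K.supp.toFinset.card.choose 2 := by
  rw [← Finset.card_powersetCard]
  apply Finset.card_le_card_of_injOn (fun e => Finset.univ.filter (· ∈ e))
  · intro e he
    rw [Finset.mem_coe, Finset.mem_filter] at he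
    rw [Finset.mem_coe, Finset.mem_powersetCard]
    constructor
    · intro v hv
      rw [Finset.mem_filter] at hv
      rw [mem_suppF, ecomp_eq_of_mem (mem_EF.1 he.1) hv.2, he.2]
    · exact card_filter_mem_edge (mem_EF.1 he.1)
  · intro e he f hf h
    have hmem : ∀ x : V, x ∈ e ↔ x ∈ f := by
      intro x
      have h' := Finset.ext_iff.1 h x
      simpa using h'
    exact Sym2.ext hmem
end comps
/-! ### terminal case bound -/

lemma terminal_bound {Δ c : ℕ} (hΔ : 1 ≤ Δ) (hc : c = (Δ+1)/2)
    (hdeg : ∀ v : V, degF G v ≤ Δ)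
    (hterm : ∀ v : V, ∃ M, MatIn G Finset.univ M ∧ M.card = nu G ∧ ¬ cov M v) :
    (EF G).card ≤ Δ * nu G + (Δ - c) * (nu G / c) := by
  have hc1 : 1 ≤ c := by omega
  set νf := fun K : G.ConnectedComponent => nuIn G K.supp.toFinset with hνf
  -- Gallai bound on each component
  have hgal : ∀ K : G.ConnectedComponent, K.supp.toFinset.card ≤ 2 * νf K + 1 := by
    intro K
    apply gallai
    · intro u hu v hadj
      rw [mem_suppF] at hu ⊢
      rw [← hu]
      exact (SimpleGraph.ConnectedComponent.sound hadj.reachable).symm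
    · intro u hu v hv
      rw [mem_suppF] at hu hv
      exact SimpleGraph.ConnectedComponent.exact (hu.trans hv.symm)
    · intro x hx
      obtain ⟨M, hM, hMc, hMx⟩ := hterm x
      obtain ⟨hres, hresc⟩ := restrict_matching hM hMc K
      refine ⟨_, hres, hresc, ?_⟩
      intro hcov
      obtain ⟨e, he, hxe⟩ := hcov
      exact hMx ⟨e, (Finset.mem_filter.1 he).1, hxe⟩
  -- per-component edge bounds
  have hbound : ∀ K : G.ConnectedComponent,
      ((EF G).filter (fun e => ecomp G e = K)).card
        ≤ Δ * νf K + (if c ≤ νf K then Δ - c else 0) := by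
    intro K
    by_cases hKc : c ≤ νf K
    · rw [if_pos hKc]
      have h1 := comp_degree_sum (G := G) K
      have h2 : ∑ v ∈ K.supp.toFinset, degF G v ≤ K.supp.toFinset.card * Δ := by
        calc ∑ v ∈ K.supp.toFinset, degF G v ≤ ∑ _v ∈ K.supp.toFinset, Δ :=
              Finset.sum_le_sum (fun v _ => hdeg v)
          _ = K.supp.toFinset.card * Δ := by rw [Finset.sum_const, smul_eq_mul]
      have h3 : K.supp.toFinset.card * Δ ≤ (2 * νf K + 1) * Δ :=
        Nat.mul_le_mul_right Δ (hgal K)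
      have h4 : (2 * νf K + 1) * Δ = 2 * (Δ * νf K) + Δ := by ring
      omega
    · rw [if_neg hKc]
      push_neg at hKc
      have h1 := comp_clique_bound (G := G) K
      have h2 : K.supp.toFinset.card.choose 2 ≤ (2 * νf K + 1).choose 2 :=
        Nat.choose_le_choose 2 (hgal K)
      have h3 : (2 * νf K + 1).choose 2 = νf K * (2 * νf K + 1) := by
        rw [Nat.choose_two_right]
        have h4 : 2 * νf K + 1 - 1 = 2 * νf K := by omega
        rw [h4]
        have h5 : (2 * νf K + 1) * (2 * νf K) = (νf K * (2 * νf K + 1)) * 2 := by ring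
        rw [h5, Nat.mul_div_cancel _ (by norm_num)]
      have h6 : 2 * νf K + 1 ≤ Δ := by omega
      have h7 : νf K * (2 * νf K + 1) ≤ νf K * Δ := Nat.mul_le_mul_left _ h6
      have h8 : νf K * Δ = Δ * νf K := Nat.mul_comm _ _
      omega
  -- sum up
  have hsum := edge_sum (G := G)
  have htot : (EF G).card ≤ Δ * (∑ K, νf K) +
      (Δ - c) * (Finset.univ.filter (fun K : G.ConnectedComponent => c ≤ νf K)).card := by
    rw [hsum]
    calc ∑ K ∈ (Finset.univ : Finset G.ConnectedComponent),
          ((EF G).filter (fun e => ecomp G e = K)).card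
        ≤ ∑ K ∈ (Finset.univ : Finset G.ConnectedComponent),
            (Δ * νf K + (if c ≤ νf K then Δ - c else 0)) :=
          Finset.sum_le_sum (fun K _ => hbound K)
      _ = Δ * (∑ K, νf K) +
          (Δ - c) * (Finset.univ.filter (fun K : G.ConnectedComponent => c ≤ νf K)).card := by
          rw [Finset.sum_add_distrib, ← Finset.mul_sum]
          congr 1
          rw [Finset.sum_ite, Finset.sum_const, Finset.sum_const_zero, add_zero,
            smul_eq_mul, mul_comm]
  have hνtot : (∑ K, νf K) ≤ nu G := sum_nuIn_le
  have hR : (Finset.univ.filter (fun K : G.ConnectedComponent => c ≤ νf K)).card ≤ nu G / c := by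
    rw [Nat.le_div_iff_mul_le hc1]
    calc (Finset.univ.filter (fun K : G.ConnectedComponent => c ≤ νf K)).card * c
        = ∑ _K ∈ (Finset.univ.filter (fun K : G.ConnectedComponent => c ≤ νf K)), c := by
          rw [Finset.sum_const, smul_eq_mul]
      _ ≤ ∑ K ∈ (Finset.univ.filter (fun K : G.ConnectedComponent => c ≤ νf K)), νf K :=
          Finset.sum_le_sum (fun K hK => (Finset.mem_filter.1 hK).2)
      _ ≤ ∑ K, νf K := Finset.sum_le_sum_of_subset (Finset.filter_subset _ _)
      _ ≤ nu G := hνtot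
  calc (EF G).card ≤ _ := htot
    _ ≤ Δ * nu G + (Δ - c) * (nu G / c) :=
        Nat.add_le_add (Nat.mul_le_mul_left _ hνtot) (Nat.mul_le_mul_left _ hR)
/-! ### vertex deletion -/

section delete
variable (G) (v : V)

/-- the graph with `v` deleted -/
noncomputable abbrev Gdel := G.induce ({v}ᶜ : Set V)

lemma Gdel_adj {a b : ({v}ᶜ : Set V)} : (Gdel G v).Adj a b ↔ G.Adj a b := by
  simp [Gdel]

lemma card_Gdel : Fintype.card ({v}ᶜ : Set V) = Fintype.card V - 1 := by
  have he : ({v}ᶜ : Set V) ≃ {x : V // ¬ x = v} :=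
    Equiv.subtypeEquivRight (by intro x; simp)
  rw [Fintype.card_congr he, Fintype.card_subtype_compl, Fintype.card_subtype_eq]

lemma degF_Gdel (u : ({v}ᶜ : Set V)) : degF (Gdel G v) u ≤ degF G u.val := by
  apply Finset.card_le_card_of_injOn (fun x => x.val)
  · intro x hx
    simp only [Finset.mem_coe, Finset.mem_filter] at hx
    simp only [Finset.mem_coe, Finset.mem_filter]
    exact ⟨Finset.mem_univ _, (Gdel_adj G v).1 hx.2⟩
  · intro x _ y _ h
    exact Subtype.ext h

lemma EF_Gdel : (EF G).card ≤ (EF (Gdel G v)).card + degF G v := by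
  have hsplit := Finset.card_filter_add_card_filter_not
    (s := EF G) (p := fun e => v ∈ e)
  have hdeg : ((EF G).filter (fun e => v ∈ e)).card = degF G v :=
    (degF_eq_card_incidence v).symm
  have hnotv : ((EF G).filter (fun e => ¬ v ∈ e)).card ≤ (EF (Gdel G v)).card := by
    apply Finset.card_le_card_of_surjOn (Sym2.map (fun x => x.val))
    intro e he
    rw [Finset.mem_coe, Finset.mem_filter] at he
    induction e using Sym2.ind with
    | _ a b =>
      have hadj : G.Adj a b := (SimpleGraph.mem_edgeSet G).1 (mem_EF.1 he.1)
      have ha : a ∈ ({v}ᶜ : Set V) := by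
        simp only [Set.mem_compl_iff, Set.mem_singleton_iff]
        intro h; exact he.2 (h ▸ Sym2.mem_mk_left a b)
      have hb : b ∈ ({v}ᶜ : Set V) := by
        simp only [Set.mem_compl_iff, Set.mem_singleton_iff]
        intro h; exact he.2 (h ▸ Sym2.mem_mk_right a b)
      refine ⟨s(⟨a, ha⟩, ⟨b, hb⟩), ?_, ?_⟩
      · rw [Finset.mem_coe, mem_EF, SimpleGraph.mem_edgeSet]
        exact (Gdel_adj G v).2 hadj
      · rw [Sym2.map_pair_eq]
  omega

lemma nu_Gdel (hcase : ¬ ∃ M, MatIn G Finset.univ M ∧ M.card = nu G ∧ ¬ cov M v) :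
    nu (Gdel G v) + 1 ≤ nu G := by
  obtain ⟨M', hM', hM'c⟩ := exists_max_matching (G := Gdel G v) (S := Finset.univ)
  set up := M'.image (Sym2.map (fun x : ({v}ᶜ : Set V) => x.val)) with hup
  have hinj := Sym2.map.injective (Subtype.val_injective (p := fun x => x ∈ ({v}ᶜ : Set V)))
  have hupcard : up.card = M'.card := Finset.card_image_of_injective _ hinj
  have hvert : ∀ e ∈ up, ∀ x ∈ e, x ≠ v := by
    intro e he x hx
    rw [hup, Finset.mem_image] at he
    obtain ⟨e', he', rfl⟩ := he
    obtain ⟨y, hy, rfl⟩ := Sym2.mem_map.1 hx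
    exact y.2
  have hmat : MatIn G Finset.univ up := by
    refine ⟨⟨?_, ?_⟩, fun e _ x _ => Finset.mem_univ x⟩
    · intro e he
      rw [Finset.mem_coe, hup, Finset.mem_image] at he
      obtain ⟨e', he', rfl⟩ := he
      induction e' using Sym2.ind with
      | _ a b =>
        rw [Sym2.map_pair_eq, SimpleGraph.mem_edgeSet]
        exact (Gdel_adj G v).1 ((SimpleGraph.mem_edgeSet _).1 (hM'.1.1 he'))
    · intro e he f hf hef x hx
      rw [hup, Finset.mem_image] at he hf
      obtain ⟨e', he', rfl⟩ := he
      obtain ⟨f', hf', rfl⟩ := hf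
      obtain ⟨y, hy, hyx⟩ := Sym2.mem_map.1 hx.1
      obtain ⟨z, hz, hzx⟩ := Sym2.mem_map.1 hx.2
      have hyz : y = z := Subtype.ext (hyx.trans hzx.symm)
      subst hyz
      exact hM'.1.2 e' he' f' hf' (fun h => hef (h ▸ rfl)) y ⟨hy, hz⟩
  have hcov : ¬ cov up v := by
    rintro ⟨e, he, hv⟩
    exact hvert e he v hv rfl
  have hne : up.card ≠ nu G := by
    intro h
    exact hcase ⟨up, hmat, h, hcov⟩
  have hle : up.card ≤ nu G := card_le_nuIn hmat
  rw [hupcard, hM'c] at hne hle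
  have : nu (Gdel G v) = nuIn (Gdel G v) Finset.univ := rfl
  omega
end delete
/-! ### main induction -/

lemma main : ∀ n : ℕ, ∀ {V : Type u} [Fintype V] (G : SimpleGraph V),
    Fintype.card V = n →
    ∀ {Δ c : ℕ}, 1 ≤ Δ → c = (Δ+1)/2 → (∀ v, degF G v ≤ Δ) →
    (EF G).card ≤ Δ * nu G + (Δ - c) * (nu G / c) := by
  intro n
  induction n using Nat.strong_induction_on with
  | _ n IH =>
  intro V _ G hcard Δ c hΔ hc hdeg
  by_cases hcase : ∀ v : V, ∃ M, MatIn G Finset.univ M ∧ M.card = nu G ∧ ¬ cov M v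
  · exact terminal_bound hΔ hc hdeg hcase
  · rw [not_forall] at hcase
    obtain ⟨v, hv⟩ := hcase
    have hnu1 : 1 ≤ nu G := by
      rcases Nat.eq_zero_or_pos (nu G) with h0 | h
      · exfalso
        apply hv
        refine ⟨∅, empty_matIn, by simp [h0], ?_⟩
        rintro ⟨e, he, -⟩
        simp at he
      · exact h
    have hnpos : 0 < n := hcard ▸ Fintype.card_pos_iff.2 ⟨v⟩
    have hcard' : Fintype.card ({v}ᶜ : Set V) = n - 1 := by rw [card_Gdel, hcard]
    have IH' := IH (n-1) (by omega) (Gdel G v) hcard' hΔ hc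
      (fun u => le_trans (degF_Gdel G v u) (hdeg u.val))
    have h1 := EF_Gdel G v
    have h2 := nu_Gdel G v hv
    have h3 : Δ * nu (Gdel G v) + Δ ≤ Δ * nu G := by
      calc Δ * nu (Gdel G v) + Δ = Δ * (nu (Gdel G v) + 1) := by ring
        _ ≤ Δ * nu G := Nat.mul_le_mul_left _ h2
    have h4 : nu (Gdel G v) / c ≤ nu G / c := Nat.div_le_div_right (by omega)
    have h5 : (Δ-c) * (nu (Gdel G v) / c) ≤ (Δ-c) * (nu G / c) := Nat.mul_le_mul_left _ h4
    have h6 := hdeg v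
    omega
end CH


theorem stmt1 {V : Type*} [Fintype V] [DecidableEq V] (G : SimpleGraph V)
    [DecidableRel G.Adj] (β Δ : ℕ) (hβ : 1 ≤ β) (hΔ : 1 ≤ Δ)
    (hmatch : ∀ M : Finset (Sym2 V), ↑M ⊆ G.edgeSet →
      (∀ e ∈ M, ∀ f ∈ M, e ≠ f → ∀ v : V, ¬(v ∈ e ∧ v ∈ f)) → M.card ≤ β)
    (hdeg : ∀ v : V, G.degree v ≤ Δ) :
    G.edgeFinset.card ≤ Δ * β + (Δ / 2) * (β / ((Δ + 1) / 2)) ∧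
      G.edgeFinset.card ≤ Δ * β + β := by
  set c := (Δ + 1) / 2 with hc
  have hc1 : 1 ≤ c := by omega
  have hdegF : ∀ v : V, CH.degF G v ≤ Δ := by
    intro v
    have heq : Finset.univ.filter (fun u => G.Adj v u) = G.neighborFinset v := by
      ext u
      simp [SimpleGraph.mem_neighborFinset]
    rw [CH.degF, Finset.filter_congr_decidable, heq]
    exact hdeg v
  have hEF : CH.EF G = G.edgeFinset := by
    ext e
    simp [CH.EF, SimpleGraph.mem_edgeFinset]
  have hnuβ : CH.nu G ≤ β := by
    obtain ⟨M, hM, hMc⟩ := CH.exists_max_matching (G := G) (S := Finset.univ)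
    rw [CH.nu, ← hMc]
    exact hmatch M hM.1.1 hM.1.2
  have hmain := CH.main (Fintype.card V) G rfl hΔ hc hdegF
  rw [hEF] at hmain
  have hdc : Δ - c = Δ / 2 := by omega
  rw [hdc] at hmain
  have hb1 : G.edgeFinset.card ≤ Δ * β + (Δ / 2) * (β / c) := by
    have h1 : Δ * CH.nu G ≤ Δ * β := Nat.mul_le_mul_left _ hnuβ
    have h2 : (Δ/2) * (CH.nu G / c) ≤ (Δ/2) * (β / c) :=
      Nat.mul_le_mul_left _ (Nat.div_le_div_right hnuβ)
    omega
  refine ⟨hb1, le_trans hb1 ?_⟩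
  have h3 : (Δ/2) * (β / c) ≤ c * (β / c) := Nat.mul_le_mul_right _ (by omega)
  have h4 : c * (β / c) ≤ β := by
    rw [mul_comm]
    exact Nat.div_mul_le_self β c
  omega
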